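/- arXiv:1804.08948 — 4 statements merged into one kernel-verified Lean document; each statement's English description precedes it below -/
import Mathlib

section
/- Let M ≥ 1 and let clients j_0,…,j_{M-1} be ordered so that for each facility s the clients of ball(s,o) are consecutive. Define τ(j_p) = j_q with q = (p + ⌊M/2⌋) mod M. Then τ is a bijection, and for every facility s with |ball(s,o)| ≤ M/2, τ maps no client of ball(s,o) to another client of ball(s,o). -/
private lemma mod_cases (x M : ℕ) (hM : 1 ≤ M) (hx : x < 2 * M) :
    x % M = x ∨ (M ≤ x ∧ x % M = x - M) := by
  rcases Nat.lt_or_ge x M with h | h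
  · exact Or.inl (Nat.mod_eq_of_lt h)
  · right
    refine ⟨h, ?_⟩
    rw [Nat.mod_eq_sub_mod h, Nat.mod_eq_of_lt (by omega)]

/-- The cyclic shift τ by ⌊M/2⌋ modulo M is a bijection, and it maps no client
of a consecutive block of size ≤ M/2 to another client of the same block. -/
theorem stmt_3 (M : ℕ) (hM : 1 ≤ M)
    (τ : Fin M → Fin M)
    (hτ : ∀ p : Fin M, (τ p).val = (p.val + M / 2) % M) :
    Function.Bijective τ ∧
    ∀ a b : ℕ, a ≤ b → b < M → 2 * (b - a + 1) ≤ M →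
      ∀ p : Fin M, a ≤ p.val → p.val ≤ b →
        ¬(a ≤ (τ p).val ∧ (τ p).val ≤ b) := by
  have hd : 2 * (M / 2) ≤ M ∧ M ≤ 2 * (M / 2) + 1 := by
    have := Nat.div_add_mod M 2
    have := Nat.mod_lt M (show 0 < 2 by norm_num)
    omega
  constructor
  · rw [Fintype.bijective_iff_injective_and_card]
    refine ⟨fun p q hpq => ?_, rfl⟩
    have h1 := hτ p
    have h2 := hτ q
    rw [hpq] at h1
    have hp := p.isLt
    have hq := q.isLt
    have c1 := mod_cases (p.val + M / 2) M hM (by omega)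
    have c2 := mod_cases (q.val + M / 2) M hM (by omega)
    exact Fin.ext (by omega)
  · intro a b hab hbM hsize p hap hpb ⟨h1, h2⟩
    have ht := hτ p
    have hp := p.isLt
    have c := mod_cases (p.val + M / 2) M hM (by omega)
    omega
end

section
/- The set D_sp = ∪_{o∈O_sp} (dom(π(o)) \ {o}) is disjoint from O_sp. -/
/-- D_sp = ∪_{o∈O_sp} (dom(π(o)) \ {o}) is disjoint from O_sp. -/
theorem stmt_8 {FS FO C : Type*} [Fintype FS] [DecidableEq FS] [DecidableEq C]
    (ball : FS → FO → Finset C)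
    (hdisj : ∀ (o'' : FO) (s s' : FS), s ≠ s' → Disjoint (ball s o'') (ball s' o''))
    (M : FO → ℕ) (hM : ∀ o'' : FO, M o'' = ∑ s : FS, (ball s o'').card)
    (dominates : Finset FS → FO → Prop)
    (hdomdef : ∀ (T : Finset FS) (o'' : FO),
      dominates T o'' ↔ M o'' < 2 * ∑ s ∈ T, (ball s o'').card)
    (Osp : Set FO) (π : FO → Finset FS)
    (hπdisj : ∀ o ∈ Osp, ∀ o' ∈ Osp, o ≠ o' → Disjoint (π o) (π o'))
    (hπdom : ∀ o ∈ Osp, dominates (π o) o)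
    (Dsp : Set FO)
    (hDsp : Dsp = ⋃ o ∈ Osp, ({o'' : FO | dominates (π o) o''} \ {o})) :
    Disjoint Dsp Osp := by
  rw [Set.disjoint_left]
  intro o' hD hO
  rw [hDsp] at hD
  simp only [Set.mem_iUnion, Set.mem_diff, Set.mem_setOf_eq, Set.mem_singleton_iff] at hD
  obtain ⟨o, ho, hdom, hne⟩ := hD
  have h1 := (hdomdef (π o) o').mp hdom
  have h2 := (hdomdef (π o') o').mp (hπdom o' hO)
  have hdisjπ : Disjoint (π o) (π o') := hπdisj o ho o' hO (fun h => hne (h ▸ rfl))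
  have hsum : ∑ s ∈ π o, (ball s o').card + ∑ s ∈ π o', (ball s o').card
      = ∑ s ∈ π o ∪ π o', (ball s o').card :=
    (Finset.sum_union hdisjπ).symm
  have hle : ∑ s ∈ π o ∪ π o', (ball s o').card ≤ M o' := by
    rw [hM o']
    exact Finset.sum_le_sum_of_subset (Finset.subset_univ _)
  omega
end

section
/- Suppose for each facility o ∈ O there are weights w_o ∈ {1,2,3} and the inequality Σ_{o∈O} w_o Σ_{j∈B_O(o)} (O_j − S_j) + 3 Σ_{j∈C_L} (O_j + O_{τ(j)} + S_{τ(j)} − S_j) > 0 holds, where τ is a bijection of C_L, each per-client term O_j + O_{τ(j)} + S_{τ(j)} − S_j is nonnegative, the B_O(o) partition C, and C_L ⊆ C. Then Σ_{j∈C} S_j < 3 Σ_{j∈C} O_j + 6 Σ_{j∈C_L} O_j ≤ 9 Σ_{j∈C} O_j. -/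
/-- From the weighted swap inequality (weights w_o ∈ {1,2,3}) one obtains
Σ S_j < 3 Σ O_j + 6 Σ_{C_L} O_j ≤ 9 Σ O_j. -/
theorem stmt_13 {FO C : Type*} [Fintype FO] [Fintype C] [DecidableEq C]
    (Oc Sc : C → ℝ) (hOnn : ∀ j, 0 ≤ Oc j) (hSnn : ∀ j, 0 ≤ Sc j)
    (B : FO → Finset C)
    (hpart : ∀ j : C, ∃! o : FO, j ∈ B o)
    (CL : Finset C)
    (τ : C → C) (hτ : Set.BijOn τ ↑CL ↑CL)
    (w : FO → ℕ) (hw : ∀ o, w o = 1 ∨ w o = 2 ∨ w o = 3)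
    (hterm : ∀ j ∈ CL, 0 ≤ Oc j + Oc (τ j) + Sc (τ j) - Sc j)
    (hineq : 0 < ∑ o : FO, (w o : ℝ) * ∑ j ∈ B o, (Oc j - Sc j) +
        3 * ∑ j ∈ CL, (Oc j + Oc (τ j) + Sc (τ j) - Sc j)) :
    ∑ j : C, Sc j < 3 * ∑ j : C, Oc j + 6 * ∑ j ∈ CL, Oc j ∧
    3 * ∑ j : C, Oc j + 6 * ∑ j ∈ CL, Oc j ≤ 9 * ∑ j : C, Oc j := by
  classical
  choose σ hmem huniq using hpart
  have hB : ∀ o : FO, B o = Finset.univ.filter (fun j => σ j = o) := by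
    intro o
    ext j
    simp only [Finset.mem_filter, Finset.mem_univ, true_and]
    constructor
    · intro h; exact (huniq j o h).symm
    · intro h; exact h ▸ hmem j
  -- sum over τ
  have hsum : ∀ f : C → ℝ, ∑ j ∈ CL, f (τ j) = ∑ j ∈ CL, f j := by
    intro f
    apply Finset.sum_bij (fun a _ => τ a)
    · intro a ha
      exact Finset.mem_coe.mp (hτ.mapsTo (Finset.mem_coe.mpr ha))
    · intro a ha b hb h
      exact hτ.injOn (Finset.mem_coe.mpr ha) (Finset.mem_coe.mpr hb) h
    · intro b hb
      obtain ⟨a, ha, h⟩ := hτ.surjOn (Finset.mem_coe.mpr hb)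
      exact ⟨a, Finset.mem_coe.mp ha, h⟩
    · intro a _; rfl
  have hCLsum : 3 * ∑ j ∈ CL, (Oc j + Oc (τ j) + Sc (τ j) - Sc j)
      = 6 * ∑ j ∈ CL, Oc j := by
    have e1 : ∑ j ∈ CL, (Oc j + Oc (τ j) + Sc (τ j) - Sc j)
        = ∑ j ∈ CL, Oc j + ∑ j ∈ CL, Oc (τ j) + ∑ j ∈ CL, Sc (τ j)
          - ∑ j ∈ CL, Sc j := by
      rw [← Finset.sum_add_distrib, ← Finset.sum_add_distrib,
        ← Finset.sum_sub_distrib]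
    rw [e1, hsum Oc, hsum Sc]
    ring
  -- per-facility bound
  have hwb : ∀ o : FO, (1 : ℝ) ≤ (w o : ℝ) ∧ (w o : ℝ) ≤ 3 := by
    intro o
    rcases hw o with h | h | h <;> rw [h] <;> norm_num
  have hfac : ∀ o : FO, (w o : ℝ) * ∑ j ∈ B o, (Oc j - Sc j)
      ≤ ∑ j ∈ B o, (3 * Oc j - Sc j) := by
    intro o
    rw [Finset.mul_sum]
    apply Finset.sum_le_sum
    intro j _
    obtain ⟨h1, h3⟩ := hwb o
    have hO := hOnn j; have hS := hSnn j
    nlinarith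
  have hpartsum : ∑ o : FO, ∑ j ∈ B o, (3 * Oc j - Sc j)
      = ∑ j : C, (3 * Oc j - Sc j) := by
    calc ∑ o : FO, ∑ j ∈ B o, (3 * Oc j - Sc j)
        = ∑ o : FO, ∑ j ∈ Finset.univ.filter (fun j => σ j = o),
            (3 * Oc j - Sc j) := by
          apply Finset.sum_congr rfl; intro o _; rw [hB o]
      _ = ∑ j : C, (3 * Oc j - Sc j) := Finset.sum_fiberwise _ _ _
  have hmain : ∑ o : FO, (w o : ℝ) * ∑ j ∈ B o, (Oc j - Sc j)
      ≤ 3 * ∑ j : C, Oc j - ∑ j : C, Sc j := by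
    calc ∑ o : FO, (w o : ℝ) * ∑ j ∈ B o, (Oc j - Sc j)
        ≤ ∑ o : FO, ∑ j ∈ B o, (3 * Oc j - Sc j) :=
          Finset.sum_le_sum fun o _ => hfac o
      _ = ∑ j : C, (3 * Oc j - Sc j) := hpartsum
      _ = 3 * ∑ j : C, Oc j - ∑ j : C, Sc j := by
          rw [Finset.sum_sub_distrib, Finset.mul_sum]
  have hsub : ∑ j ∈ CL, Oc j ≤ ∑ j : C, Oc j :=
    Finset.sum_le_sum_of_subset_of_nonneg (Finset.subset_univ CL)
      (fun j _ _ => hOnn j)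
  constructor
  · rw [hCLsum] at hineq; linarith
  · linarith
end

section
/- In the penalty setting, if for every client j that pays penalty in O but not in S we have p_j ≥ S_j (since otherwise j would pay penalty in S by local optimality of the min-cost assignment), then Σ_{j ∈ P(O)\P(S)} 3(p_j − S_j) ≥ 0, and summing the local-optimality inequalities yields cost(S) ≤ 9·cost(O), where cost includes service costs plus penalties. -/
/-- CkMP: if every client paying penalty in O but served in S has p_j ≥ S_j,
then Σ_{j∈P(O)\P(S)} 3(p_j − S_j) ≥ 0, and the summed local-optimality swap
inequality yields cost(S) ≤ 9·cost(O), costs including service plus penalties. -/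
theorem stmt_17 {FO C : Type*} [Fintype FO] [Fintype C] [DecidableEq C]
    (Oc Sc pen : C → ℝ)
    (hOnn : ∀ j, 0 ≤ Oc j) (hSnn : ∀ j, 0 ≤ Sc j) (hpnn : ∀ j, 0 ≤ pen j)
    (PS PO : Finset C)           -- penalty sets of S and O
    (B : FO → Finset C)          -- clients served by o in O
    (hpart : ∀ j ∉ PO, ∃! o : FO, j ∈ B o)
    (hBPO : ∀ o : FO, Disjoint (B o) PO)
    (CL : Finset C)              -- clients served by light facilities of S
    (hCLPS : Disjoint CL PS)
    (τ : C → C) (hτ : Set.BijOn τ ↑(CL \ PO) ↑(CL \ PO))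
    (w : FO → ℕ) (hw : ∀ o, w o = 1 ∨ w o = 2 ∨ w o = 3)
    (hterm : ∀ j ∈ CL \ PO, 0 ≤ Oc j + Oc (τ j) + Sc (τ j) - Sc j)
    -- clients paying penalty in O but not in S satisfy p_j ≥ S_j
    (hpen : ∀ j ∈ PO \ PS, Sc j ≤ pen j)
    -- the summed local-optimality inequalities
    (hineq : 0 < ∑ o : FO, (w o : ℝ) *
        (∑ j ∈ B o \ PS, (Oc j - Sc j) + ∑ j ∈ B o ∩ PS, (Oc j - pen j)) +
      3 * ∑ j ∈ CL ∩ PO, (pen j - Sc j) +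
      3 * ∑ j ∈ CL \ PO, (Oc j + Oc (τ j) + Sc (τ j) - Sc j))
    (costS costO : ℝ)
    (hcostS : costS = ∑ j ∈ Finset.univ \ PS, Sc j + ∑ j ∈ PS, pen j)
    (hcostO : costO = ∑ j ∈ Finset.univ \ PO, Oc j + ∑ j ∈ PO, pen j) :
    0 ≤ ∑ j ∈ PO \ PS, 3 * (pen j - Sc j) ∧ costS ≤ 9 * costO := by
  classical
  constructor
  · exact Finset.sum_nonneg fun j hj => by have := hpen j hj; linarith
  set s1 := (Finset.univ \ PO) \ PS with hs1
  set s2 := (Finset.univ \ PO) ∩ PS with hs2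
  set g : C → ℝ := fun j => if j ∈ PS then 3 * Oc j - pen j else 3 * Oc j - Sc j with hg
  -- partition facts
  have hdisj : (↑(Finset.univ : Finset FO) : Set FO).PairwiseDisjoint B := by
    intro o _ o' _ hne
    refine Finset.disjoint_left.mpr fun j hj hj' => ?_
    have hjPO : j ∉ PO := Finset.disjoint_left.mp (hBPO o) hj
    obtain ⟨u, hu, huni⟩ := hpart j hjPO
    exact hne (((huni o hj).trans (huni o' hj').symm))
  have hUnion : Finset.univ.biUnion B = Finset.univ \ PO := by
    ext j
    simp only [Finset.mem_biUnion, Finset.mem_univ, true_and, Finset.mem_sdiff]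
    constructor
    · rintro ⟨o, hj⟩
      exact Finset.disjoint_left.mp (hBPO o) hj
    · intro hj
      obtain ⟨o, ho, _⟩ := hpart j hj
      exact ⟨o, ho⟩
  -- per-facility split of sums
  have hsplit : ∀ (s t : Finset C) (f : C → ℝ),
      ∑ j ∈ s ∩ t, f j + ∑ j ∈ s \ t, f j = ∑ j ∈ s, f j := by
    intro s t f
    exact Finset.sum_inter_add_sum_sdiff s t f
  have key1 : ∑ o : FO, (w o : ℝ) *
      (∑ j ∈ B o \ PS, (Oc j - Sc j) + ∑ j ∈ B o ∩ PS, (Oc j - pen j))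
      ≤ ∑ j ∈ s1, (3 * Oc j - Sc j) + ∑ j ∈ s2, (3 * Oc j - pen j) := by
    have step1 : ∀ o : FO, (w o : ℝ) *
        (∑ j ∈ B o \ PS, (Oc j - Sc j) + ∑ j ∈ B o ∩ PS, (Oc j - pen j))
        ≤ ∑ j ∈ B o, g j := by
      intro o
      have hw1 : (1 : ℝ) ≤ (w o : ℝ) := by
        rcases hw o with h | h | h <;> rw [h] <;> norm_num
      have hw3 : ((w o : ℝ)) ≤ 3 := by
        rcases hw o with h | h | h <;> rw [h] <;> norm_num
      rw [← hsplit (B o) PS g, mul_add, Finset.mul_sum, Finset.mul_sum, add_comm]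
      gcongr with j hj j hj
      · -- j ∈ B o ∩ PS
        have hjPS : j ∈ PS := (Finset.mem_inter.mp hj).2
        simp only [hg, if_pos hjPS]
        nlinarith [hOnn j, hpnn j]
      · -- j ∈ B o \ PS
        have hjPS : j ∉ PS := (Finset.mem_sdiff.mp hj).2
        simp only [hg, if_neg hjPS]
        nlinarith [hOnn j, hSnn j]
    calc ∑ o : FO, (w o : ℝ) *
        (∑ j ∈ B o \ PS, (Oc j - Sc j) + ∑ j ∈ B o ∩ PS, (Oc j - pen j))
        ≤ ∑ o : FO, ∑ j ∈ B o, g j := Finset.sum_le_sum fun o _ => step1 o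
      _ = ∑ j ∈ Finset.univ \ PO, g j := by
          rw [← hUnion, Finset.sum_biUnion hdisj]
      _ = ∑ j ∈ s2, g j + ∑ j ∈ s1, g j := (hsplit _ PS g).symm
      _ = ∑ j ∈ s1, (3 * Oc j - Sc j) + ∑ j ∈ s2, (3 * Oc j - pen j) := by
          rw [add_comm]
          congr 1
          · refine Finset.sum_congr rfl fun j hj => ?_
            have : j ∉ PS := (Finset.mem_sdiff.mp hj).2
            simp [hg, this]
          · refine Finset.sum_congr rfl fun j hj => ?_
            have : j ∈ PS := (Finset.mem_inter.mp hj).2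
            simp [hg, this]
  -- tau sum
  have hτsum : ∀ f : C → ℝ, ∑ j ∈ CL \ PO, f (τ j) = ∑ j ∈ CL \ PO, f j := by
    intro f
    refine Finset.sum_bij (fun j _ => τ j) ?_ ?_ ?_ ?_
    · intro a ha
      exact Finset.mem_coe.mp (hτ.mapsTo (Finset.mem_coe.mpr ha))
    · intro a ha b hb h
      exact hτ.injOn (Finset.mem_coe.mpr ha) (Finset.mem_coe.mpr hb) h
    · intro b hb
      obtain ⟨a, ha, hab⟩ := hτ.surjOn (Finset.mem_coe.mpr hb)
      exact ⟨a, Finset.mem_coe.mp ha, hab⟩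
    · intro a _
      rfl
  have key2 : ∑ j ∈ CL \ PO, (Oc j + Oc (τ j) + Sc (τ j) - Sc j)
      = 2 * ∑ j ∈ CL \ PO, Oc j := by
    have h1 : ∑ j ∈ CL \ PO, (Oc j + Oc (τ j) + Sc (τ j) - Sc j)
        = ∑ j ∈ CL \ PO, Oc j + ∑ j ∈ CL \ PO, Oc (τ j)
          + ∑ j ∈ CL \ PO, Sc (τ j) - ∑ j ∈ CL \ PO, Sc j := by
      rw [Finset.sum_sub_distrib, Finset.sum_add_distrib, Finset.sum_add_distrib]
    rw [h1, hτsum Oc, hτsum Sc]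
    ring
  have key3 : ∑ j ∈ CL \ PO, Oc j ≤ ∑ j ∈ Finset.univ \ PO, Oc j := by
    apply Finset.sum_le_sum_of_subset_of_nonneg
    · intro j hj
      simp only [Finset.mem_sdiff, Finset.mem_univ, true_and] at hj ⊢
      exact hj.2
    · intro j _ _
      exact hOnn j
  have key4 : ∑ j ∈ CL ∩ PO, (pen j - Sc j) ≤ ∑ j ∈ PO \ PS, (pen j - Sc j) := by
    apply Finset.sum_le_sum_of_subset_of_nonneg
    · intro j hj
      rw [Finset.mem_inter] at hj
      rw [Finset.mem_sdiff]
      exact ⟨hj.2, Finset.disjoint_left.mp hCLPS hj.1⟩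
    · intro j hj _
      have := hpen j hj
      linarith
  -- combine hineq with the bounds
  have main : 0 ≤ ∑ j ∈ s1, (3 * Oc j - Sc j) + ∑ j ∈ s2, (3 * Oc j - pen j)
      + 3 * ∑ j ∈ PO \ PS, (pen j - Sc j) + 6 * ∑ j ∈ Finset.univ \ PO, Oc j := by
    have h2 : 3 * ∑ j ∈ CL \ PO, (Oc j + Oc (τ j) + Sc (τ j) - Sc j)
        ≤ 6 * ∑ j ∈ Finset.univ \ PO, Oc j := by
      rw [key2]; linarith
    linarith [hineq, key1, key4]
  -- expand sums
  have e1 : ∑ j ∈ s1, (3 * Oc j - Sc j) = 3 * ∑ j ∈ s1, Oc j - ∑ j ∈ s1, Sc j := by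
    rw [Finset.sum_sub_distrib, Finset.mul_sum]
  have e2 : ∑ j ∈ s2, (3 * Oc j - pen j) = 3 * ∑ j ∈ s2, Oc j - ∑ j ∈ s2, pen j := by
    rw [Finset.sum_sub_distrib, Finset.mul_sum]
  have e3 : ∑ j ∈ PO \ PS, (pen j - Sc j)
      = ∑ j ∈ PO \ PS, pen j - ∑ j ∈ PO \ PS, Sc j := Finset.sum_sub_distrib pen Sc
  have eO : ∑ j ∈ s2, Oc j + ∑ j ∈ s1, Oc j = ∑ j ∈ Finset.univ \ PO, Oc j :=
    hsplit _ PS Oc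
  -- decompose costS and costO pieces
  have d1 : ((Finset.univ \ PS) ∩ PO : Finset C) = PO \ PS := by
    ext j; simp [Finset.mem_sdiff, Finset.mem_inter, and_comm]
  have d2 : (Finset.univ \ PS) \ PO = s1 := by
    ext j; simp only [hs1, Finset.mem_sdiff, Finset.mem_univ, true_and]; tauto
  have dS : ∑ j ∈ Finset.univ \ PS, Sc j = ∑ j ∈ PO \ PS, Sc j + ∑ j ∈ s1, Sc j := by
    rw [← hsplit (Finset.univ \ PS) PO Sc, d1, d2]
  have d3 : (PS ∩ PO : Finset C) = PO ∩ PS := Finset.inter_comm PS PO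
  have d4 : PS \ PO = s2 := by
    ext j; simp only [hs2, Finset.mem_sdiff, Finset.mem_inter, Finset.mem_univ,
      true_and]; tauto
  have dP : ∑ j ∈ PS, pen j = ∑ j ∈ PO ∩ PS, pen j + ∑ j ∈ s2, pen j := by
    rw [← hsplit PS PO pen, d3, d4]
  have dO : ∑ j ∈ PO, pen j = ∑ j ∈ PO ∩ PS, pen j + ∑ j ∈ PO \ PS, pen j :=
    (hsplit PO PS pen).symm
  -- nonnegativity of remaining sums
  have nb3 : 0 ≤ ∑ j ∈ PO \ PS, Sc j := Finset.sum_nonneg fun j _ => hSnn j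
  have nc3 : 0 ≤ ∑ j ∈ PO \ PS, pen j := Finset.sum_nonneg fun j _ => hpnn j
  have nc4 : 0 ≤ ∑ j ∈ PO ∩ PS, pen j := Finset.sum_nonneg fun j _ => hpnn j
  rw [hcostS, hcostO, dS, dP, dO]
  rw [e1, e2, e3] at main
  linarith [main, eO]
end
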